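/- arXiv:1607.03833 — 2 statements merged into one kernel-verified Lean document; each statement's English description precedes it below -/
import Mathlib

section
/- Among all nonnegative integrable radial functions ρ on ℝ² with ∫ρ = 1, the functional E[ρ] = ∫_{ℝ²}(|x|^s + ρ(x))ρ(x) dx, s ≥ 2, is uniquely minimized by ρ^{TF}(x) = (1/2)[λ^{TF} − |x|^s]_+, where λ^{TF} > 0 is the unique constant making ∫ ρ^{TF} = 1. -/
open MeasureTheory Metric

local notation "E2" => EuclideanSpace ℝ (Fin 2)

lemma tf_cont (s lam : ℝ) (hs : 0 < s) :
    Continuous (fun x : E2 => (1/2) * max (lam - ‖x‖ ^ s) 0) := by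
  exact continuous_const.mul ((continuous_const.sub
    (continuous_norm.rpow_const (fun x => Or.inr hs.le))).max continuous_const)

lemma tf_hcs (s lam : ℝ) (hs : 0 < s) (hlam : 0 < lam) :
    HasCompactSupport (fun x : E2 => (1/2) * max (lam - ‖x‖ ^ s) 0) := by
  apply HasCompactSupport.intro (isCompact_closedBall (0 : E2) (lam ^ s⁻¹))
  intro x hx
  simp only [mem_closedBall, dist_zero_right, not_le] at hx
  have hR : (0:ℝ) ≤ lam ^ s⁻¹ := Real.rpow_nonneg hlam.le _
  have h1 : (lam ^ s⁻¹) ^ s ≤ ‖x‖ ^ s := Real.rpow_le_rpow hR hx.le hs.le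
  rw [Real.rpow_inv_rpow hlam.le (ne_of_gt hs)] at h1
  have : max (lam - ‖x‖ ^ s) 0 = 0 := max_eq_right (by linarith)
  simp [this]

lemma tf_integrable (s lam : ℝ) (hs : 0 < s) (hlam : 0 < lam) :
    Integrable (fun x : E2 => (1/2) * max (lam - ‖x‖ ^ s) 0) :=
  (tf_cont s lam hs).integrable_of_hasCompactSupport (tf_hcs s lam hs hlam)

lemma tf_integrable2 (s lam : ℝ) (hs : 0 < s) (hlam : 0 < lam) :
    Integrable (fun x : E2 =>
      (‖x‖ ^ s + (1/2) * max (lam - ‖x‖ ^ s) 0) * ((1/2) * max (lam - ‖x‖ ^ s) 0)) := by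
  have hc : Continuous (fun x : E2 =>
      (‖x‖ ^ s + (1/2) * max (lam - ‖x‖ ^ s) 0) * ((1/2) * max (lam - ‖x‖ ^ s) 0)) :=
    ((continuous_norm.rpow_const (fun x => Or.inr hs.le)).add (tf_cont s lam hs)).mul
      (tf_cont s lam hs)
  exact hc.integrable_of_hasCompactSupport ((tf_hcs s lam hs hlam).mul_left)

lemma tf_key (lam a r : ℝ) (hr : 0 ≤ r) :
    (r - (1/2) * max (lam - a) 0)^2 ≤
      (a + r) * r - (a + (1/2) * max (lam - a) 0) * ((1/2) * max (lam - a) 0)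
        - lam * (r - (1/2) * max (lam - a) 0) := by
  rcases le_total lam a with h | h
  · rw [max_eq_right (by linarith)]; nlinarith
  · rw [max_eq_left (by linarith)]; nlinarith

lemma tf_uniq (s l1 l2 : ℝ) (hs : 0 < s) (h1 : 0 < l1) (h12 : l1 < l2)
    (hn1 : (∫ x : E2, (1/2) * max (l1 - ‖x‖ ^ s) 0) = 1)
    (hn2 : (∫ x : E2, (1/2) * max (l2 - ‖x‖ ^ s) 0) = 1) : False := by
  set r : ℝ := l1 ^ s⁻¹ with hr
  have hrpos : 0 < r := Real.rpow_pos_of_pos h1 _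
  set c : ℝ := (1/2) * (l2 - l1) with hc
  have hcpos : 0 < c := by rw [hc]; linarith
  have hpt : ∀ x : E2, (closedBall (0:E2) r).indicator (fun _ => c) x ≤
      (1/2) * max (l2 - ‖x‖ ^ s) 0 - (1/2) * max (l1 - ‖x‖ ^ s) 0 := by
    intro x
    by_cases hx : x ∈ closedBall (0:E2) r
    · rw [Set.indicator_of_mem hx]
      simp only [mem_closedBall, dist_zero_right] at hx
      have h1' : ‖x‖ ^ s ≤ r ^ s := Real.rpow_le_rpow (norm_nonneg x) hx hs.le
      rw [hr, Real.rpow_inv_rpow h1.le (ne_of_gt hs)] at h1'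
      rw [max_eq_left (by linarith), max_eq_left (by linarith)]
      ring_nf
      linarith
    · rw [Set.indicator_of_notMem hx]
      have : max (l1 - ‖x‖ ^ s) 0 ≤ max (l2 - ‖x‖ ^ s) 0 :=
        max_le_max (by linarith) le_rfl
      linarith
  have hind : Integrable ((closedBall (0:E2) r).indicator (fun _ => c)) := by
    rw [integrable_indicator_iff measurableSet_closedBall]
    exact integrableOn_const measure_closedBall_lt_top.ne enorm_ne_top
  have hsub : Integrable (fun x : E2 =>
      (1/2) * max (l2 - ‖x‖ ^ s) 0 - (1/2) * max (l1 - ‖x‖ ^ s) 0) :=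
    (tf_integrable s l2 hs (h1.trans h12)).sub (tf_integrable s l1 hs h1)
  have hle : (∫ x : E2, (closedBall (0:E2) r).indicator (fun _ => c) x) ≤
      ∫ x : E2, ((1/2) * max (l2 - ‖x‖ ^ s) 0 - (1/2) * max (l1 - ‖x‖ ^ s) 0) :=
    integral_mono hind hsub hpt
  rw [integral_sub (tf_integrable s l2 hs (h1.trans h12)) (tf_integrable s l1 hs h1),
    hn1, hn2, integral_indicator_const c measurableSet_closedBall] at hle
  have hvol : 0 < (volume (closedBall (0:E2) r)).toReal :=
    ENNReal.toReal_pos (ne_of_gt (measure_closedBall_pos volume _ hrpos))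
      (ne_of_lt measure_closedBall_lt_top)
  have : 0 < (volume (closedBall (0:E2) r)).toReal • c := smul_pos hvol hcpos
  rw [measureReal_def] at hle
  linarith

/-- The Thomas–Fermi functional `E[ρ] = ∫ (|x|^s + ρ)ρ` on ℝ², `s ≥ 2`, restricted to
nonnegative integrable radial densities of unit mass, is uniquely minimized by
`ρ^{TF}(x) = (1/2)[λ − |x|^s]_+`, where `λ > 0` is the unique constant giving unit mass. -/
theorem stmt_3 (s : ℝ) (hs : 2 ≤ s) (lam : ℝ) (hlam : 0 < lam)
    (hnorm : (∫ x : EuclideanSpace ℝ (Fin 2), (1 / 2) * max (lam - ‖x‖ ^ s) 0) = 1) :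
    (∀ lam' : ℝ, 0 < lam' →
      (∫ x : EuclideanSpace ℝ (Fin 2), (1 / 2) * max (lam' - ‖x‖ ^ s) 0) = 1 →
      lam' = lam) ∧
    ∀ ρ : EuclideanSpace ℝ (Fin 2) → ℝ,
      Integrable ρ → (∀ x, 0 ≤ ρ x) →
      (∀ x y : EuclideanSpace ℝ (Fin 2), ‖x‖ = ‖y‖ → ρ x = ρ y) →
      (∫ x, ρ x) = 1 →
      Integrable (fun x => (‖x‖ ^ s + ρ x) * ρ x) →
      ((∫ x : EuclideanSpace ℝ (Fin 2),
          (‖x‖ ^ s + (1 / 2) * max (lam - ‖x‖ ^ s) 0) * ((1 / 2) * max (lam - ‖x‖ ^ s) 0))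
        ≤ ∫ x, (‖x‖ ^ s + ρ x) * ρ x) ∧
      ((∫ x, (‖x‖ ^ s + ρ x) * ρ x) =
          (∫ x : EuclideanSpace ℝ (Fin 2),
            (‖x‖ ^ s + (1 / 2) * max (lam - ‖x‖ ^ s) 0) * ((1 / 2) * max (lam - ‖x‖ ^ s) 0)) →
        ρ =ᵐ[(volume : Measure (EuclideanSpace ℝ (Fin 2)))]
          fun x => (1 / 2) * max (lam - ‖x‖ ^ s) 0) := by
  have hs0 : (0:ℝ) < s := by linarith
  constructor
  · intro lam' hlam' hn'
    by_contra hne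
    rcases lt_or_gt_of_ne hne with h | h
    · exact tf_uniq s lam' lam hs0 hlam' h hn' hnorm
    · exact tf_uniq s lam lam' hs0 hlam h hnorm hn'
  · intro ρ hρint hρ0 _ hρ1 hquad
    set g : E2 → ℝ := fun x => (1/2) * max (lam - ‖x‖ ^ s) 0 with hg
    have hgint : Integrable g := tf_integrable s lam hs0 hlam
    have hg2int : Integrable (fun x : E2 => (‖x‖ ^ s + g x) * g x) :=
      tf_integrable2 s lam hs0 hlam
    have hF : ∀ x : E2, (ρ x - g x)^2 ≤
        (‖x‖ ^ s + ρ x) * ρ x - (‖x‖ ^ s + g x) * g x - lam * (ρ x - g x) :=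
      fun x => tf_key lam (‖x‖ ^ s) (ρ x) (hρ0 x)
    have hFnn : ∀ x : E2, 0 ≤
        (‖x‖ ^ s + ρ x) * ρ x - (‖x‖ ^ s + g x) * g x - lam * (ρ x - g x) :=
      fun x => le_trans (sq_nonneg _) (hF x)
    have hFint : Integrable (fun x : E2 =>
        (‖x‖ ^ s + ρ x) * ρ x - (‖x‖ ^ s + g x) * g x - lam * (ρ x - g x)) :=
      (hquad.sub hg2int).sub ((hρint.sub hgint).const_mul lam)
    have hIF : (∫ x : E2,
        ((‖x‖ ^ s + ρ x) * ρ x - (‖x‖ ^ s + g x) * g x - lam * (ρ x - g x))) =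
        (∫ x, (‖x‖ ^ s + ρ x) * ρ x) - (∫ x : E2, (‖x‖ ^ s + g x) * g x) := by
      have e1 := integral_sub (hquad.sub hg2int) ((hρint.sub hgint).const_mul lam)
      have e2 := integral_sub hquad hg2int
      have e3 := integral_sub hρint hgint
      simp only [Pi.sub_apply] at e1 e2 e3
      rw [e1, e2, integral_const_mul, e3, hρ1]
      have hg1 : (∫ x : E2, g x) = 1 := hnorm
      rw [hg1]
      ring
    have hmain : (∫ x : E2, (‖x‖ ^ s + g x) * g x) ≤ ∫ x, (‖x‖ ^ s + ρ x) * ρ x := by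
      have h0 : 0 ≤ ∫ x : E2,
          ((‖x‖ ^ s + ρ x) * ρ x - (‖x‖ ^ s + g x) * g x - lam * (ρ x - g x)) :=
        integral_nonneg hFnn
      rw [hIF] at h0
      linarith
    refine ⟨hmain, fun heq => ?_⟩
    have h0 : (∫ x : E2,
        ((‖x‖ ^ s + ρ x) * ρ x - (‖x‖ ^ s + g x) * g x - lam * (ρ x - g x))) = 0 := by
      rw [hIF, heq]; ring
    have hae : (fun x : E2 =>
        (‖x‖ ^ s + ρ x) * ρ x - (‖x‖ ^ s + g x) * g x - lam * (ρ x - g x))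
        =ᵐ[volume] 0 := by
      rw [← integral_eq_zero_iff_of_nonneg hFnn hFint]
      exact h0
    filter_upwards [hae] with x hx
    have hsq : (ρ x - g x)^2 ≤ 0 := by
      have := hF x
      simp only [Pi.zero_apply] at hx
      linarith
    have : ρ x - g x = 0 := by nlinarith [sq_nonneg (ρ x - g x)]
    simpa [sub_eq_zero] using this
end

section
/- Let γ⁰ be an orthogonal projection on a Hilbert space and Q a bounded self-adjoint operator. Then the operator inequality −γ⁰ ≤ Q ≤ 1 − γ⁰ holds if and only if Q^{++} − Q^{−−} ≥ Q², where Q^{++} = (1−γ⁰)Q(1−γ⁰) and Q^{−−} = γ⁰ Q γ⁰. -/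
set_option synthInstance.maxHeartbeats 1000000
set_option maxHeartbeats 1000000

open ContinuousLinearMap in
/-- For a self-adjoint operator `A` on a Hilbert space, `0 ≤ A ≤ 1` iff `A - A² ≥ 0`. -/
lemma aux_pauli {H : Type*} [NormedAddCommGroup H] [InnerProductSpace ℂ H]
    [CompleteSpace H] (A : H →L[ℂ] H) (hA : IsSelfAdjoint A) :
    (A.IsPositive ∧ ((1 : H →L[ℂ] H) - A).IsPositive) ↔ (A - A * A).IsPositive := by
  constructor
  · rintro ⟨h0, h1⟩
    rw [← ContinuousLinearMap.nonneg_iff_isPositive] at h0 h1 ⊢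
    set s := CFC.sqrt A with hs
    have hs0 : (0 : H →L[ℂ] H) ≤ s := CFC.sqrt_nonneg A
    have hss : s * s = A := CFC.sqrt_mul_sqrt_self A h0
    have hstar : star s = s := IsSelfAdjoint.of_nonneg hs0
    have hconj : (0 : H →L[ℂ] H) ≤ star s * ((1 : H →L[ℂ] H) - A) * s :=
      star_left_conjugate_nonneg h1 s
    have : star s * ((1 : H →L[ℂ] H) - A) * s = A - A * A := by
      rw [hstar, ← hss]
      noncomm_ring
    rwa [this] at hconj
  · intro h
    have hkey : ∀ x : H, ‖A x‖ ^ 2 ≤ RCLike.re (inner ℂ (A x) x : ℂ) := by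
      intro x
      have h2 := h.2 x
      rw [ContinuousLinearMap.reApplyInnerSelf_apply] at h2
      have hsymm : (inner ℂ (A (A x)) x : ℂ) = inner ℂ (A x) (A x) :=
        (isSelfAdjoint_iff_isSymmetric.mp hA) (A x) x
      have : (inner ℂ ((A - A * A) x) x : ℂ) = inner ℂ (A x) x - inner ℂ (A x) (A x) := by
        simp only [ContinuousLinearMap.sub_apply, ContinuousLinearMap.mul_apply,
          inner_sub_left]
        rw [hsymm]
      rw [this] at h2
      rw [map_sub] at h2
      have hn : RCLike.re (inner ℂ (A x) (A x) : ℂ) = ‖A x‖ ^ 2 := by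
        rw [← inner_self_eq_norm_sq (𝕜 := ℂ)]
      linarith [h2, hn.ge, hn.le]
    constructor
    · exact ⟨isSelfAdjoint_iff_isSymmetric.mp hA, fun x => by
        rw [ContinuousLinearMap.reApplyInnerSelf_apply]
        exact le_trans (by positivity) (hkey x)⟩
    · refine ⟨isSelfAdjoint_iff_isSymmetric.mp ((IsSelfAdjoint.one (H →L[ℂ] H)).sub hA), fun x => ?_⟩
      rw [ContinuousLinearMap.reApplyInnerSelf_apply]
      have hcs : RCLike.re (inner ℂ (A x) x : ℂ) ≤ ‖A x‖ * ‖x‖ := re_inner_le_norm _ _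
      have hk := hkey x
      have : (inner ℂ (((1 : H →L[ℂ] H) - A) x) x : ℂ) = inner ℂ x x - inner ℂ (A x) x := by
        simp [ContinuousLinearMap.sub_apply, inner_sub_left]
      rw [this, map_sub]
      have hx : RCLike.re (inner ℂ x x : ℂ) = ‖x‖ ^ 2 := by
        rw [← inner_self_eq_norm_sq (𝕜 := ℂ)]
      rw [hx]
      nlinarith [norm_nonneg (A x), norm_nonneg x, sq_nonneg (‖A x‖ - ‖x‖)]

/-- For an orthogonal projection `P = γ⁰` and a bounded self-adjoint operator `Q`, the
Pauli-principle operator inequality `−γ⁰ ≤ Q ≤ 1 − γ⁰` is equivalent to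
`Q^{++} − Q^{−−} ≥ Q²`, where `Q^{++} = (1−γ⁰)Q(1−γ⁰)` and `Q^{−−} = γ⁰Qγ⁰`. -/
theorem stmt_17 {H : Type*} [NormedAddCommGroup H] [InnerProductSpace ℂ H]
    [CompleteSpace H]
    (P Q : H →L[ℂ] H) (hP : IsSelfAdjoint P) (hProj : P * P = P)
    (hQ : IsSelfAdjoint Q) :
    ((Q + P).IsPositive ∧ ((1 - P) - Q).IsPositive) ↔
      ((((1 - P) * Q * (1 - P)) - (P * Q * P) - Q * Q).IsPositive) := by
  have halg : ((1 - P) * Q * (1 - P)) - (P * Q * P) - Q * Q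
      = (Q + P) - (Q + P) * (Q + P) := by
    have : (Q + P) * (Q + P) = Q * Q + Q * P + P * Q + P := by
      rw [add_mul, mul_add, mul_add, hProj]; abel
    rw [this]; noncomm_ring
  have h1 : ((1 : H →L[ℂ] H) - P) - Q = 1 - (Q + P) := by abel
  rw [halg, h1]
  exact aux_pauli (Q + P) (hQ.add hP)
end
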